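/- For every instance I, the greedy choice function output Ch*(I) satisfies non-wastefulness: |Ch*(I)| = min(|S|, q). -/

import Mathlib

open Classical

/-- An instance `I = (S, q, ≻, T, τ, η)`: a finite set of students with a strict
total order (priority, modeled by a linear order where `s' < s` means `s ≻ s'`),
a positive capacity `q`, a finite set of types `T`, a type assignment `τ`, and
ranked quotas `η t j` for ranks `j ∈ {1,…,r}`. -/
structure Inst where
  S : Type
  T : Type
  [fS : Fintype S]
  [dS : DecidableEq S]
  [lS : LinearOrder S]
  [fT : Fintype T]
  [dT : DecidableEq T]
  q : ℕ
  qpos : 0 < q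
  r : ℕ
  τ : S → Finset T
  η : T → ℕ → ℕ

attribute [instance] Inst.fS Inst.dS Inst.lS Inst.fT Inst.dT

/-- `s ≻ s'` : student `s` has strictly higher priority than `s'`. -/
def Inst.prio (I : Inst) (s s' : I.S) : Prop := s' < s

/-- A (potential) reserved seat: a type (`none` = the general type `t₀`),
a rank, and an index. -/
abbrev SeatT (I : Inst) := Option I.T × ℕ × ℕ

/-- The rank of a seat. -/
def seatRank (I : Inst) (v : SeatT I) : ℕ := v.2.1

/-- The type of a seat (`none` = general type `t₀`). -/
def seatType (I : Inst) (v : SeatT I) : Option I.T := v.1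

/-- Seats actually present in the ranked reservation graph: for each type `t`, rank
`1 ≤ j ≤ r` and index `i < η t j` a seat, and `q` general seats of rank `r`. -/
def SeatValid (I : Inst) (v : SeatT I) : Prop :=
  match v.1 with
  | some t => 1 ≤ v.2.1 ∧ v.2.1 ≤ I.r ∧ v.2.2 < I.η t v.2.1
  | none => v.2.1 = I.r ∧ v.2.2 < I.q

/-- There is an edge between student `s` and a seat of type `t` iff `t ∈ τ s` or
`t` is the general type `t₀`. -/
def EdgeOK (I : Inst) (s : I.S) (v : SeatT I) : Prop :=
  match v.1 with
  | some t => t ∈ I.τ s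
  | none => True

/-- A matching in the ranked reservation graph: a set of edges of `G` in which
every student and every seat appears at most once. -/
def IsMatching (I : Inst) (M : Finset (I.S × SeatT I)) : Prop :=
  (∀ e ∈ M, SeatValid I e.2 ∧ EdgeOK I e.1 e.2) ∧
  (∀ e ∈ M, ∀ e' ∈ M, e.1 = e'.1 → e = e') ∧
  (∀ e ∈ M, ∀ e' ∈ M, e.2 = e'.2 → e = e')

/-- `S_M`: the set of students covered by the matching `M`. -/
def covered (I : Inst) (M : Finset (I.S × SeatT I)) : Finset I.S := M.image Prod.fst

/-- `x_i`: the number of edges of rank `i` in `M` (the `i`-th entry of the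
signature `ρ(M)`). -/
def sig (I : Inst) (M : Finset (I.S × SeatT I)) (i : ℕ) : ℕ :=
  (M.filter (fun e => seatRank I e.2 = i)).card

/-- `ρ(M) <lex ρ(M')` : the signature of `M'` is lexicographically strictly
better than that of `M`. -/
def SigLT (I : Inst) (M M' : Finset (I.S × SeatT I)) : Prop :=
  ∃ k, 1 ≤ k ∧ k ≤ I.r ∧ (∀ i, 1 ≤ i → i < k → sig I M i = sig I M' i) ∧
    sig I M k < sig I M' k

/-- A matching of size at most `q` is rank-maximal if its signature is
lexicographically ≥ that of every matching of size at most `q`. -/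
def RankMaximal (I : Inst) (M : Finset (I.S × SeatT I)) : Prop :=
  IsMatching I M ∧ M.card ≤ I.q ∧
    ∀ M', IsMatching I M' → M'.card ≤ I.q → ¬ SigLT I M M'

/-- `U`: the set of groups (type combinations actually occurring among students). -/
def groups (I : Inst) : Finset (Finset I.T) := Finset.univ.image I.τ

/-- `S_u`: the set of students of group `u`. -/
def Su (I : Inst) (u : Finset I.T) : Finset I.S :=
  Finset.univ.filter (fun s => I.τ s = u)

/-- `|M_u|`: the number of students of group `u` covered by `M`. -/
def Mu (I : Inst) (M : Finset (I.S × SeatT I)) (u : Finset I.T) : ℕ :=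
  ((covered I M).filter (fun s => I.τ s = u)).card

/-- `min_{u ∈ U} |M_u| / |S_u|` (as `WithTop ℚ`; it is `⊤` iff `U = ∅`). -/
noncomputable def minRatio (I : Inst) (M : Finset (I.S × SeatT I)) : WithTop ℚ :=
  ((groups I).image (fun u => ((Mu I M u : ℚ) / ((Su I u).card : ℚ)))).min

/-- `M` attains balanced representation: `M` is rank-maximal of size at most `q`
and maximizes `min_{u∈U} |M_u|/|S_u|` over all such matchings. -/
def BalancedRep (I : Inst) (M : Finset (I.S × SeatT I)) : Prop :=
  RankMaximal I M ∧ ∀ M', RankMaximal I M' → minRatio I M' ≤ minRatio I M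

/-- The greedy choice function `Ch*`: process the students in decreasing order of
priority, adding the current student `s` whenever some matching of size at most `q`
that is rank-maximal and attains balanced representation covers `S* ∪ {s}`. -/
noncomputable def ChStar (I : Inst) : Finset I.S :=
  ((Finset.sort (Finset.univ : Finset I.S) (· ≤ ·)).reverse).foldl
    (fun A s =>
      if ∃ M, BalancedRep I M ∧ insert s A ⊆ covered I M then insert s A else A) ∅

/-- Non-wastefulness of a chosen set: `|S*| = min (|S|, q)`. -/
def NonWasteful (I : Inst) (A : Finset I.S) : Prop :=
  A.card = min (Fintype.card I.S) I.q

/-- Maximal diversity of a chosen set: some rank-maximal matching of size at most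
`q` covers only students of `S*`. -/
def MaxDiversity (I : Inst) (A : Finset I.S) : Prop :=
  ∃ M, RankMaximal I M ∧ covered I M ⊆ A

/-- Balanced representation of a chosen set: some matching in `𝕄` attaining
balanced representation covers all of `S*`. -/
def BalancedRepSet (I : Inst) (A : Finset I.S) : Prop :=
  ∃ M, BalancedRep I M ∧ A ⊆ covered I M

/-- Justified envy-freeness: no `s ∉ S*`, `s' ∈ S*` with `s ≻ s'` such that
`(S* ∪ {s}) \ {s'}` satisfies both maximal diversity and balanced representation. -/
def JEF (I : Inst) (A : Finset I.S) : Prop :=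
  ¬ ∃ s s', s ∉ A ∧ s' ∈ A ∧ I.prio s s' ∧
    MaxDiversity I (insert s A \ {s'}) ∧ BalancedRepSet I (insert s A \ {s'})

/-- `I` is valid w.r.t. a target vector `δ`: some rank-maximal matching of size at
most `q` has `|M_u| ≥ δ_u` for every group `u ∈ U`. -/
def ValidWrt (I : Inst) (δ : Finset I.T → ℕ) : Prop :=
  ∃ M, RankMaximal I M ∧ ∀ u ∈ groups I, δ u ≤ Mu I M u

/-- The max-min ratio `α(I)`: the maximum over rank-maximal matchings `M` of
size at most `q` of `min_{u∈U} |M_u|/|S_u|`. -/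
noncomputable def alphaQ (I : Inst) : ℚ :=
  let cands : Finset ℚ :=
    ((Finset.Icc 0 (Fintype.card I.S)) ×ˢ groups I).image
      (fun p => (p.1 : ℚ) / ((Su I p.2).card : ℚ))
  WithBot.unbotD 0 ((cands.filter
      (fun x : ℚ => ∃ M, RankMaximal I M ∧ minRatio I M = (x : WithTop ℚ))).max)

/-- The crucial vector `δ*` : `δ*_u = ⌊α(I)·|S_u|⌋`. -/
noncomputable def deltaStar (I : Inst) (u : Finset I.T) : ℕ :=
  ⌊alphaQ I * ((Su I u).card : ℚ)⌋₊

/-- The `k` highest-priority students of `A`. -/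
def topK (I : Inst) (A : Finset I.S) (k : ℕ) : Finset I.S :=
  A.filter (fun s => (A.filter (fun s' => s ≤ s')).card ≤ k)

/-! ### The flow network -/

/-- Nodes of the flow network: `Sum.inl 0` = source `a`, `Sum.inl 1` = sink `b`,
`Sum.inl 2` = the capacity node `Q`; group nodes, type nodes (`none` = `t₀`),
and rank nodes `t^i` (rank value `i+1` for `i : Fin r`). -/
abbrev Node (I : Inst) := Fin 3 ⊕ Finset I.T ⊕ Option I.T ⊕ (Option I.T × Fin I.r)

def nSrc (I : Inst) : Node I := Sum.inl 0
def nSink (I : Inst) : Node I := Sum.inl 1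
def nQ (I : Inst) : Node I := Sum.inl 2
def nGrp (I : Inst) (u : Finset I.T) : Node I := Sum.inr (Sum.inl u)
def nTyp (I : Inst) (t : Option I.T) : Node I := Sum.inr (Sum.inr (Sum.inl t))
def nRnk (I : Inst) (t : Option I.T) (i : Fin I.r) : Node I :=
  Sum.inr (Sum.inr (Sum.inr (t, i)))

/-- Quotas including the general type: `η_{t₀}^r = q` and `η_{t₀}^j = 0` for `j < r`. -/
def ηgen (I : Inst) (t : Option I.T) (j : ℕ) : ℕ :=
  match t with
  | some t => I.η t j
  | none => if j = I.r then I.q else 0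

/-- Capacities of the flow network (capacity `0` = no edge). -/
def cap (I : Inst) : Node I → Node I → ℕ := fun x y =>
  match x, y with
  | Sum.inl a, Sum.inl b => if a = 2 ∧ b = 1 then I.q else 0
  | Sum.inl a, Sum.inr (Sum.inl u) => if a = 0 then (Su I u).card else 0
  | Sum.inr (Sum.inl u), Sum.inr (Sum.inr (Sum.inl (some t))) =>
      ((Su I u).filter (fun s => t ∈ I.τ s)).card
  | Sum.inr (Sum.inl u), Sum.inr (Sum.inr (Sum.inl none)) => (Su I u).card
  | Sum.inr (Sum.inr (Sum.inl t)), Sum.inr (Sum.inr (Sum.inr (t', i))) =>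
      if t = t' then ηgen I t' ((i : ℕ) + 1) else 0
  | Sum.inr (Sum.inr (Sum.inr (t, i))), Sum.inl a =>
      if a = 2 then ηgen I t ((i : ℕ) + 1) else 0
  | _, _ => 0

/-- Costs of the flow network: the edge `t → t^i` has cost equal to the rank
`i+1`; all other edges have cost `0`. -/
def cost (I : Inst) : Node I → Node I → ℕ := fun x y =>
  match x, y with
  | Sum.inr (Sum.inr (Sum.inl t)), Sum.inr (Sum.inr (Sum.inr (t', i))) =>
      if t = t' then (i : ℕ) + 1 else 0
  | _, _ => 0

/-- A flow: nonnegative, within capacities, and conserved at every node other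
than the source and the sink. -/
def IsFlow (I : Inst) (f : Node I → Node I → ℝ) : Prop :=
  (∀ x y, 0 ≤ f x y) ∧ (∀ x y, f x y ≤ (cap I x y : ℝ)) ∧
  (∀ x : Node I, x ≠ nSrc I → x ≠ nSink I → (∑ y, f y x) = ∑ y, f x y)

/-- The value of a flow: `Σ_u f(a, u)`. -/
noncomputable def flowVal (I : Inst) (f : Node I → Node I → ℝ) : ℝ :=
  ∑ u : Finset I.T, f (nSrc I) (nGrp I u)

/-- The cost of a flow: `Σ_e cost(e) · f(e)`. -/
noncomputable def flowCost (I : Inst) (f : Node I → Node I → ℝ) : ℝ :=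
  ∑ x : Node I, ∑ y : Node I, (cost I x y : ℝ) * f x y

/-- A maximum flow. -/
def IsMaxFlow (I : Inst) (f : Node I → Node I → ℝ) : Prop :=
  IsFlow I f ∧ ∀ g, IsFlow I g → flowVal I g ≤ flowVal I f

/-- A minimum-cost maximum flow. -/
def IsMinCostMaxFlow (I : Inst) (f : Node I → Node I → ℝ) : Prop :=
  IsMaxFlow I f ∧ ∀ g, IsMaxFlow I g → flowCost I f ≤ flowCost I g

/-- The flow `f_M` induced by a matching `M`. -/
noncomputable def inducedFlow (I : Inst) (M : Finset (I.S × SeatT I)) :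
    Node I → Node I → ℝ := fun x y =>
  match x, y with
  | Sum.inl a, Sum.inl b => if a = 2 ∧ b = 1 then (M.card : ℝ) else 0
  | Sum.inl a, Sum.inr (Sum.inl u) => if a = 0 then (Mu I M u : ℝ) else 0
  | Sum.inr (Sum.inl u), Sum.inr (Sum.inr (Sum.inl t)) =>
      ((M.filter (fun e => I.τ e.1 = u ∧ seatType I e.2 = t)).card : ℝ)
  | Sum.inr (Sum.inr (Sum.inl t)), Sum.inr (Sum.inr (Sum.inr (t', i))) =>
      if t = t' then
        ((M.filter (fun e => seatType I e.2 = t ∧ seatRank I e.2 = (i : ℕ) + 1)).card : ℝ)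
      else 0
  | Sum.inr (Sum.inr (Sum.inr (t, i))), Sum.inl a =>
      if a = 2 then
        ((M.filter (fun e => seatType I e.2 = t ∧ seatRank I e.2 = (i : ℕ) + 1)).card : ℝ)
      else 0
  | _, _ => 0

/-! ### Alternating and augmenting paths -/

/-- The edge set of a path encoded by its list of students `a₀,…` and list of
seats `v₀,…` (edges `(aₖ, vₖ)` and `(aₖ₊₁, vₖ)`). -/
def edgesOf (I : Inst) (students : List I.S) (seats : List (SeatT I)) :
    Finset (I.S × SeatT I) :=
  (students.zip seats).toFinset ∪ (students.tail.zip seats).toFinset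

/-- Symmetric difference `M ⊕ P = (M \ P) ∪ (P \ M)`. -/
def symmDiffM (I : Inst) (M P : Finset (I.S × SeatT I)) : Finset (I.S × SeatT I) :=
  (M \ P) ∪ (P \ M)

/-- An alternating path w.r.t. `M` from an uncovered student to a covered student:
students `a₀, …, aₙ` and seats `v₀, …, vₙ₋₁`, with `(aₖ, vₖ) ∉ M` edges of `G`
and `(aₖ₊₁, vₖ) ∈ M`. -/
structure AltPath (I : Inst) (M : Finset (I.S × SeatT I)) where
  students : List I.S
  seats : List (SeatT I)
  len : students.length = seats.length + 1
  nodupS : students.Nodup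
  nodupV : seats.Nodup
  notM : ∀ e ∈ students.zip seats, e ∉ M ∧ SeatValid I e.2 ∧ EdgeOK I e.1 e.2
  inM : ∀ e ∈ students.tail.zip seats, e ∈ M

/-- The edge set of an alternating path. -/
def AltPath.edges {I : Inst} {M : Finset (I.S × SeatT I)} (P : AltPath I M) :
    Finset (I.S × SeatT I) :=
  edgesOf I P.students P.seats

/-- An augmenting path w.r.t. `M` from an uncovered student to an uncovered seat:
students `a₀, …, aₙ` and seats `v₀, …, vₙ`, with `(aₖ, vₖ) ∉ M` edges of `G`
and `(aₖ₊₁, vₖ) ∈ M`. -/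
structure AugPath (I : Inst) (M : Finset (I.S × SeatT I)) where
  students : List I.S
  seats : List (SeatT I)
  len : students.length = seats.length
  nodupS : students.Nodup
  nodupV : seats.Nodup
  notM : ∀ e ∈ students.zip seats, e ∉ M ∧ SeatValid I e.2 ∧ EdgeOK I e.1 e.2
  inM : ∀ e ∈ students.tail.zip seats, e ∈ M

/-- The edge set of an augmenting path. -/
def AugPath.edges {I : Inst} {M : Finset (I.S × SeatT I)} (P : AugPath I M) :
    Finset (I.S × SeatT I) :=
  edgesOf I P.students P.seats

/-- The instance obtained from `I` by restricting the student set to `X`. -/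
@[reducible] def restrict (I : Inst) (X : Finset I.S) : Inst :=
  { S := {s : I.S // s ∈ X}
    T := I.T
    fS := inferInstance
    dS := inferInstance
    lS := inferInstance
    fT := I.fT
    dT := I.dT
    q := I.q
    qpos := I.qpos
    r := I.r
    τ := fun s => I.τ s.1
    η := I.η }

section Aux
open Finset

variable {I : Inst}

/-! ### Finiteness of the set of matchings -/

/-- Bound on seat indices. -/
def idxBound (I : Inst) : ℕ :=
  I.q + ∑ t : I.T, ∑ j ∈ Finset.range (I.r + 1), I.η t j

def seatsFin (I : Inst) : Finset (SeatT I) :=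
  (Finset.univ : Finset (Option I.T)) ×ˢ
    (Finset.range (I.r + 1) ×ˢ Finset.range (idxBound I))

def E0 (I : Inst) : Finset (I.S × SeatT I) := Finset.univ ×ˢ seatsFin I

lemma mem_E0 {e : I.S × SeatT I} (hv : SeatValid I e.2) : e ∈ E0 I := by
  obtain ⟨s, t, j, i⟩ := e
  unfold E0 seatsFin
  simp only [Finset.mem_product, Finset.mem_univ, true_and, Finset.mem_range]
  match t with
  | some t =>
      obtain ⟨h1, h2, h3⟩ : 1 ≤ j ∧ j ≤ I.r ∧ i < I.η t j := hv
      refine ⟨by omega, ?_⟩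
      unfold idxBound
      calc i < I.η t j := h3
        _ ≤ ∑ j' ∈ Finset.range (I.r + 1), I.η t j' :=
            Finset.single_le_sum (fun _ _ => Nat.zero_le _)
              (Finset.mem_range.mpr (by omega))
        _ ≤ ∑ t' : I.T, ∑ j' ∈ Finset.range (I.r + 1), I.η t' j' :=
            Finset.single_le_sum (f := fun t' => ∑ j' ∈ Finset.range (I.r + 1), I.η t' j')
              (fun _ _ => Nat.zero_le _) (Finset.mem_univ t)
        _ ≤ I.q + ∑ t' : I.T, ∑ j' ∈ Finset.range (I.r + 1), I.η t' j' :=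
            Nat.le_add_left _ _
  | none =>
      obtain ⟨h1, h2⟩ : j = I.r ∧ i < I.q := hv
      unfold idxBound
      exact ⟨by omega, by omega⟩

noncomputable def cands (I : Inst) : Finset (Finset (I.S × SeatT I)) :=
  (E0 I).powerset.filter (fun M => IsMatching I M ∧ M.card ≤ I.q)

lemma mem_cands {M : Finset (I.S × SeatT I)} :
    M ∈ cands I ↔ IsMatching I M ∧ M.card ≤ I.q := by
  unfold cands
  rw [Finset.mem_filter, Finset.mem_powerset]
  constructor
  · exact fun h => h.2
  · intro h
    exact ⟨fun e he => mem_E0 ((h.1.1 e he).1), h⟩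

/-! ### Existence of rank-maximal matchings -/

noncomputable instance lexLO (I : Inst) : LinearOrder (Lex (Fin I.r → ℕ)) :=
  letI h : WellFoundedLT (Fin I.r) := inferInstance
  @Pi.Lex.linearOrder (Fin I.r) (fun _ => ℕ) _ h _

noncomputable def vec (I : Inst) (M : Finset (I.S × SeatT I)) :
    Lex (Fin I.r → ℕ) := toLex (fun i => sig I M ((i : ℕ) + 1))

lemma vec_lt {M M' : Finset (I.S × SeatT I)} (h : SigLT I M M') :
    vec I M < vec I M' := by
  obtain ⟨k, h1, hk, hpre, hlt⟩ := h
  have hplex : Pi.Lex (· < ·) (fun {_} => ((· < ·) : ℕ → ℕ → Prop))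
      (fun i : Fin I.r => sig I M ((i : ℕ) + 1))
      (fun i : Fin I.r => sig I M' ((i : ℕ) + 1)) := by
    refine ⟨⟨k - 1, by omega⟩, ?_, ?_⟩
    · intro j hj
      have hj' : (j : ℕ) < k - 1 := hj
      exact hpre ((j : ℕ) + 1) (by omega) (by omega)
    · show sig I M ((k - 1) + 1) < sig I M' ((k - 1) + 1)
      have hkk : k - 1 + 1 = k := by omega
      rw [hkk]; exact hlt
  exact hplex

lemma exists_RM (I : Inst) : ∃ M, RankMaximal I M := by
  have hne : (cands I).Nonempty := by
    refine ⟨∅, mem_cands.mpr ⟨⟨?_, ?_, ?_⟩, by simp [I.qpos.le]⟩⟩ <;> simp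
  obtain ⟨M, hM, hmax⟩ := (cands I).exists_max_image
    (fun M => (vec I M : Lex (Fin I.r → ℕ))) hne
  have hm := mem_cands.mp hM
  refine ⟨M, hm.1, hm.2, ?_⟩
  intro M' h1 h2 hlt
  exact absurd (hmax M' (mem_cands.mpr ⟨h1, h2⟩)) (not_le.mpr (vec_lt hlt))

lemma exists_bal (I : Inst) : ∃ M, BalancedRep I M := by
  obtain ⟨M0, hM0⟩ := exists_RM I
  have hne : ((cands I).filter (fun M => RankMaximal I M)).Nonempty :=
    ⟨M0, Finset.mem_filter.mpr ⟨mem_cands.mpr ⟨hM0.1, hM0.2.1⟩, hM0⟩⟩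
  obtain ⟨M, hM, hmax⟩ :=
    ((cands I).filter (fun M => RankMaximal I M)).exists_max_image (minRatio I) hne
  refine ⟨M, (Finset.mem_filter.mp hM).2, ?_⟩
  intro M' h'
  exact hmax M' (Finset.mem_filter.mpr ⟨mem_cands.mpr ⟨h'.1, h'.2.1⟩, h'⟩)

/-! ### Basic lemmas -/

lemma covered_card {M : Finset (I.S × SeatT I)} (h : IsMatching I M) :
    (covered I M).card = M.card :=
  Finset.card_image_of_injOn (fun e he e' he' hee => h.2.1 e he e' he' hee)

lemma covered_mono {M M' : Finset (I.S × SeatT I)} (h : M ⊆ M') :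
    covered I M ⊆ covered I M' := Finset.image_subset_image h

lemma Mu_mono {M M' : Finset (I.S × SeatT I)} (h : M ⊆ M') (u : Finset I.T) :
    Mu I M u ≤ Mu I M' u :=
  Finset.card_le_card (Finset.filter_subset_filter _ (Finset.image_subset_image h))

lemma minRatio_mono {M M' : Finset (I.S × SeatT I)} (h : M ⊆ M') :
    minRatio I M ≤ minRatio I M' := by
  unfold minRatio
  apply Finset.le_min
  intro b hb
  obtain ⟨u, hu, rfl⟩ := Finset.mem_image.mp hb
  refine le_trans (Finset.min_le (Finset.mem_image_of_mem _ hu)) ?_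
  rw [WithTop.coe_le_coe]
  have h2 : ((Mu I M u : ℚ)) ≤ (Mu I M' u : ℚ) := by exact_mod_cast Mu_mono h u
  gcongr

lemma sig_insert {M : Finset (I.S × SeatT I)} {e : I.S × SeatT I} (he : e ∉ M)
    (i : ℕ) :
    sig I (insert e M) i = sig I M i + if seatRank I e.2 = i then 1 else 0 := by
  by_cases h : seatRank I e.2 = i
  · rw [if_pos h]
    unfold sig
    rw [Finset.filter_insert, if_pos h,
      Finset.card_insert_of_notMem (fun hc => he (Finset.mem_filter.mp hc).1)]
  · rw [if_neg h]
    unfold sig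
    rw [Finset.filter_insert, if_neg h]
    omega

/-! ### Extension of balanced matchings -/

lemma extend_step {M : Finset (I.S × SeatT I)} (hb : BalancedRep I M)
    (hcard : M.card < min (Fintype.card I.S) I.q) :
    ∃ M', BalancedRep I M' ∧ M ⊆ M' ∧ M'.card = M.card + 1 := by
  obtain ⟨⟨hmatch, hq, hno⟩, hbal⟩ := hb
  -- an uncovered student
  obtain ⟨s, hs⟩ : ∃ s, s ∉ covered I M := by
    by_contra hcon
    push_neg at hcon
    have hsub : (Finset.univ : Finset I.S) ⊆ covered I M := fun x _ => hcon x
    have h5 := Finset.card_le_card hsub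
    rw [Finset.card_univ, covered_card hmatch] at h5
    omega
  -- a free general seat
  have hinj : Function.Injective
      (fun i => (((none : Option I.T), (I.r, i)) : SeatT I)) := by
    intro a b hab; simpa using hab
  have hgcard :
      ((Finset.range I.q).image
        (fun i => (((none : Option I.T), (I.r, i)) : SeatT I))).card = I.q := by
    rw [Finset.card_image_of_injective _ hinj, Finset.card_range]
  have hns : ¬ ((Finset.range I.q).image
      (fun i => (((none : Option I.T), (I.r, i)) : SeatT I)))
        ⊆ M.image Prod.snd := by
    intro hsub
    have h6 := Finset.card_le_card hsub
    have hu : (M.image Prod.snd).card ≤ M.card := Finset.card_image_le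
    omega
  obtain ⟨v, hvg, hvu⟩ := Finset.not_subset.mp hns
  obtain ⟨i, hi, rfl⟩ := Finset.mem_image.mp hvg
  rw [Finset.mem_range] at hi
  set e : I.S × SeatT I := (s, ((none : Option I.T), (I.r, i))) with he_def
  have heM : e ∉ M := fun h => hs (Finset.mem_image.mpr ⟨e, h, rfl⟩)
  have hrank : seatRank I e.2 = I.r := rfl
  have hmatch' : IsMatching I (insert e M) := by
    refine ⟨?_, ?_, ?_⟩
    · intro f hf
      rcases Finset.mem_insert.mp hf with rfl | hfM
      · exact ⟨⟨rfl, hi⟩, trivial⟩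
      · exact hmatch.1 f hfM
    · intro f hf g hg hfg
      rcases Finset.mem_insert.mp hf with rfl | hfM <;>
        rcases Finset.mem_insert.mp hg with rfl | hgM
      · rfl
      · exact absurd (Finset.mem_image.mpr ⟨g, hgM, hfg.symm⟩) hs
      · exact absurd (Finset.mem_image.mpr ⟨f, hfM, hfg⟩) hs
      · exact hmatch.2.1 f hfM g hgM hfg
    · intro f hf g hg hfg
      rcases Finset.mem_insert.mp hf with rfl | hfM <;>
        rcases Finset.mem_insert.mp hg with rfl | hgM
      · rfl
      · exact absurd (Finset.mem_image.mpr ⟨g, hgM, hfg.symm⟩) hvu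
      · exact absurd (Finset.mem_image.mpr ⟨f, hfM, hfg⟩) hvu
      · exact hmatch.2.2 f hfM g hgM hfg
  have hcard' : (insert e M).card = M.card + 1 := Finset.card_insert_of_notMem heM
  have hq' : (insert e M).card ≤ I.q := by omega
  have hRM' : RankMaximal I (insert e M) := by
    refine ⟨hmatch', hq', ?_⟩
    rintro M'' h1 h2 ⟨k, hk1, hkr, hpre, hlt⟩
    refine hno M'' h1 h2 ⟨k, hk1, hkr, ?_, ?_⟩
    · intro j hj1 hjk
      have hsi := sig_insert heM j
      rw [hrank, if_neg (by omega : ¬ I.r = j)] at hsi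
      have hp := hpre j hj1 hjk
      omega
    · have hsi := sig_insert heM k
      have hle : sig I M k ≤ sig I (insert e M) k := hsi ▸ Nat.le_add_right _ _
      omega
  refine ⟨insert e M, ⟨hRM', ?_⟩, Finset.subset_insert _ _, hcard'⟩
  intro M'' h''
  exact le_trans (hbal M'' h'') (minRatio_mono (Finset.subset_insert _ _))

lemma extend_full (I : Inst) :
    ∀ d (M : Finset (I.S × SeatT I)), BalancedRep I M →
      min (Fintype.card I.S) I.q ≤ M.card + d →
      ∃ N, BalancedRep I N ∧ covered I M ⊆ covered I N ∧
        min (Fintype.card I.S) I.q ≤ N.card := by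
  intro d
  induction d with
  | zero => exact fun M hb h => ⟨M, hb, subset_rfl, by omega⟩
  | succ d ih =>
    intro M hb h
    by_cases hc : min (Fintype.card I.S) I.q ≤ M.card
    · exact ⟨M, hb, subset_rfl, hc⟩
    · obtain ⟨M', hb', hsub, hcard⟩ := extend_step hb (by omega)
      obtain ⟨N, h1, h2, h3⟩ := ih M' hb' (by omega)
      exact ⟨N, h1, (covered_mono hsub).trans h2, h3⟩

/-! ### The greedy fold -/

noncomputable def gstep (I : Inst) : Finset I.S → I.S → Finset I.S := fun A s =>
  if ∃ M, BalancedRep I M ∧ insert s A ⊆ covered I M then insert s A else A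

lemma foldl_inv (I : Inst) (L : List I.S) :
    ∀ A : Finset I.S,
      A ⊆ L.foldl (gstep I) A ∧
      ((∃ M, BalancedRep I M ∧ A ⊆ covered I M) →
        ∃ M, BalancedRep I M ∧ L.foldl (gstep I) A ⊆ covered I M) ∧
      (∀ s ∈ L, s ∉ L.foldl (gstep I) A →
        ¬ ∃ M, BalancedRep I M ∧ insert s (L.foldl (gstep I) A) ⊆ covered I M) := by
  induction L with
  | nil => intro A; exact ⟨subset_rfl, id, by simp⟩
  | cons s L ih =>
    intro A
    have key : A ⊆ gstep I A s ∧
        ((∃ M, BalancedRep I M ∧ A ⊆ covered I M) →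
          ∃ M, BalancedRep I M ∧ gstep I A s ⊆ covered I M) := by
      unfold gstep
      split_ifs with h
      · obtain ⟨M, h1, h2⟩ := h
        exact ⟨Finset.subset_insert _ _, fun _ => ⟨M, h1, h2⟩⟩
      · exact ⟨subset_rfl, id⟩
    obtain ⟨ih1, ih2, ih3⟩ := ih (gstep I A s)
    simp only [List.foldl_cons]
    refine ⟨key.1.trans ih1, fun h => ih2 (key.2 h), ?_⟩
    intro s' hs' hnot
    rcases List.mem_cons.mp hs' with rfl | hmem
    · by_cases h : ∃ M, BalancedRep I M ∧ insert s' A ⊆ covered I M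
      · have hmem' : s' ∈ gstep I A s' := by
          unfold gstep
          rw [if_pos h]
          exact Finset.mem_insert_self _ _
        exact absurd (ih1 hmem') hnot
      · rintro ⟨M, hbM, hsub⟩
        exact h ⟨M, hbM,
          (Finset.insert_subset_insert _ (key.1.trans ih1)).trans hsub⟩
    · exact ih3 s' hmem hnot

end Aux

/-- `Ch*(I)` satisfies non-wastefulness: `|Ch*(I)| = min(|S|, q)`. -/
theorem chStar_nonWasteful (I : Inst) :
    (ChStar I).card = min (Fintype.card I.S) I.q := by
  obtain ⟨M0, hM0⟩ := exists_bal I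
  have hCh : ChStar I =
      ((Finset.sort (Finset.univ : Finset I.S) (· ≤ ·)).reverse).foldl (gstep I) ∅ := rfl
  obtain ⟨h1, h2, h3⟩ := foldl_inv I ((Finset.sort (Finset.univ : Finset I.S) (· ≤ ·)).reverse) ∅
  rw [hCh]
  set A := ((Finset.sort (Finset.univ : Finset I.S) (· ≤ ·)).reverse).foldl (gstep I) ∅ with hA
  obtain ⟨M, hbM, hAM⟩ := h2 ⟨M0, hM0, Finset.empty_subset _⟩
  have hub1 : A.card ≤ (covered I M).card := Finset.card_le_card hAM
  rw [covered_card hbM.1.1] at hub1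
  have hub2 := hbM.1.2.1
  have hub3 : A.card ≤ Fintype.card I.S := by
    have := Finset.card_le_card (Finset.subset_univ A)
    rwa [Finset.card_univ] at this
  obtain ⟨N, hbN, hMN, hcN⟩ := extend_full I (Fintype.card I.S) M hbM
    (le_trans (min_le_left _ _) (Nat.le_add_left _ _))
  have hAN : A ⊆ covered I N := hAM.trans hMN
  have hNA : covered I N ⊆ A := by
    intro s0 hs0
    by_contra hs0A
    have hmemL : s0 ∈ (Finset.sort (Finset.univ : Finset I.S) (· ≤ ·)).reverse := by
      rw [List.mem_reverse, Finset.mem_sort]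
      exact Finset.mem_univ _
    exact h3 s0 hmemL hs0A ⟨N, hbN, Finset.insert_subset hs0 hAN⟩
  have hEq : covered I N = A := Finset.Subset.antisymm hNA hAN
  have hlb : min (Fintype.card I.S) I.q ≤ A.card := by
    rw [← hEq, covered_card hbN.1.1]
    exact hcN
  omega
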